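/- Let β > 9/2 and let v : ℝ³ → [0, ∞) be measurable with v(z) ≤ ⟨z⟩^{−β} for all z. Let K : ℝ³ × ℝ³ → ℂ be measurable and suppose the operator with kernel |K(z,w)| is bounded on L²(ℝ³) with norm at most M, i.e. ∫∫_{ℝ⁶} |K(z,w)| f(z) g(w) dz dw ≤ M ‖f‖_{L²} ‖g‖_{L²} for all nonnegative f, g ∈ L²(ℝ³). Then there is a constant C, depending only on β, such that for all x, y ∈ ℝ³, ∫∫_{ℝ⁶} ⟨z⟩³ v(z) |K(z,w)| v(w) ⟨w⟩³ / ( min(⟨x⟩, |x−z|) · min(⟨y⟩, |w−y|) ) dz dw ≤ C M / (⟨x⟩ ⟨y⟩). -/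

import Mathlib

open MeasureTheory Real Set
open scoped ENNReal

noncomputable section

abbrev E3 := EuclideanSpace ℝ (Fin 3)

/-- Japanese bracket on ℝ³. -/
def jap (x : E3) : ℝ := Real.sqrt (1 + ‖x‖ ^ 2)

lemma jap_one_le (x : E3) : 1 ≤ jap x := by
  have : (1:ℝ) = Real.sqrt 1 := by simp
  rw [this, jap]
  exact Real.sqrt_le_sqrt (by nlinarith [sq_nonneg ‖x‖])

lemma jap_pos (x : E3) : 0 < jap x := lt_of_lt_of_le one_pos (jap_one_le x)

lemma jap_nonneg (x : E3) : 0 ≤ jap x := (jap_pos x).le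

lemma continuous_jap : Continuous jap :=
  (continuous_const.add (continuous_norm.pow 2)).sqrt

lemma norm_le_jap (x : E3) : ‖x‖ ≤ jap x := by
  have h := Real.sqrt_le_sqrt (show ‖x‖ ^ 2 ≤ 1 + ‖x‖ ^ 2 by linarith)
  rwa [Real.sqrt_sq (norm_nonneg x)] at h

lemma jap_lipschitz (x z : E3) : jap x ≤ jap z + ‖x - z‖ := by
  have hd : ‖x‖ ≤ ‖z‖ + ‖x - z‖ := by
    simpa using norm_add_le z (x - z)
  have hz : ‖z‖ ≤ jap z := norm_le_jap z
  have h2 : jap z ^ 2 = 1 + ‖z‖ ^ 2 := Real.sq_sqrt (by positivity)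
  have h1 : 1 + ‖x‖ ^ 2 ≤ (jap z + ‖x - z‖) ^ 2 := by
    nlinarith [norm_nonneg (x - z), norm_nonneg z, norm_nonneg x, jap_nonneg z]
  calc jap x = Real.sqrt (1 + ‖x‖ ^ 2) := rfl
  _ ≤ Real.sqrt ((jap z + ‖x - z‖) ^ 2) := Real.sqrt_le_sqrt h1
  _ = jap z + ‖x - z‖ := Real.sqrt_sq (by have := jap_nonneg z; positivity)

/-- Integral of `‖u‖⁻²` on balls in `ℝ³` grows linearly in the radius. -/
lemma ball_int : ∃ c : ℝ, 0 ≤ c ∧ ∀ R : ℝ, 0 < R →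
    (∫⁻ u : E3 in Metric.ball 0 R, ENNReal.ofReal (‖u‖ ^ (-2 : ℝ))) ≤
      ENNReal.ofReal (c * R) := by
  classical
  set B := volume (Metric.closedBall (0:E3) 1) with hB
  have hBfin : B ≠ ∞ := measure_closedBall_lt_top.ne
  refine ⟨8 * B.toReal, by positivity, ?_⟩
  intro R hR
  set q : ℝ := (1:ℝ)/2 with hqdef
  have hq0 : (0:ℝ) < q := by norm_num [hqdef]
  have hq1 : q < 1 := by norm_num [hqdef]
  set r : ℕ → ℝ := fun n => R * q ^ n with hr
  have hrpos : ∀ n, 0 < r n := fun n => by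
    have : (0:ℝ) < q ^ n := pow_pos hq0 n
    exact mul_pos hR this
  set s : ℕ → Set E3 := fun n =>
    {u : E3 | r (n+1) < ‖u‖} ∩ Metric.closedBall 0 (r n) with hs
  have hcover : Metric.ball (0:E3) R \ {0} ⊆ ⋃ n, s n := by
    rintro u ⟨hu1, hu2⟩
    have hune : u ≠ 0 := by simpa using hu2
    have hu0 : 0 < ‖u‖ := norm_pos_iff.2 hune
    have huR : ‖u‖ < R := by simpa [mem_ball_zero_iff] using hu1
    have hex : ∃ n : ℕ, r (n+1) < ‖u‖ := by
      obtain ⟨n, hn⟩ := exists_pow_lt_of_lt_one (div_pos hu0 hR) hq1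
      refine ⟨n, ?_⟩
      have h1 : q ^ (n+1) ≤ q ^ n := pow_le_pow_of_le_one hq0.le hq1.le (by omega)
      have h2 : R * q ^ n < ‖u‖ := by
        have h3 : q ^ n * R < ‖u‖ / R * R := mul_lt_mul_of_pos_right hn hR
        rw [div_mul_cancel₀ _ hR.ne'] at h3
        calc R * q ^ n = q ^ n * R := mul_comm _ _
        _ < ‖u‖ := h3
      calc r (n+1) = R * q ^ (n+1) := rfl
      _ ≤ R * q ^ n := by nlinarith
      _ < ‖u‖ := h2
    set n := Nat.find hex with hn
    refine mem_iUnion.2 ⟨n, Nat.find_spec hex, ?_⟩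
    rw [Metric.mem_closedBall, dist_zero_right]
    rcases Nat.eq_zero_or_pos n with h0 | hpos
    · rw [h0]
      simpa [hr, hqdef] using huR.le
    · have hm := Nat.find_min hex (show n - 1 < n by omega)
      push_neg at hm
      have : n - 1 + 1 = n := by omega
      rwa [this] at hm
  have hsing : volume ({(0:E3)} : Set E3) = 0 := measure_singleton 0
  have hterm : ∀ n : ℕ, (∫⁻ u : E3 in s n, ENNReal.ofReal (‖u‖ ^ (-2 : ℝ))) ≤
      ENNReal.ofReal (4 * R * q ^ n) * B := by
    intro n
    have hmono : (∫⁻ u : E3 in s n, ENNReal.ofReal (‖u‖ ^ (-2 : ℝ))) ≤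
        ∫⁻ _ : E3 in s n, ENNReal.ofReal (r (n+1) ^ (-2 : ℝ)) := by
      refine setLIntegral_mono measurable_const (fun u hu => ?_)
      exact ENNReal.ofReal_le_ofReal
        (Real.rpow_le_rpow_of_nonpos (hrpos (n+1)) hu.1.le (by norm_num))
    have hvol : volume (s n) ≤ ENNReal.ofReal (r n ^ 3) * B := by
      calc volume (s n) ≤ volume (Metric.closedBall (0:E3) (r n)) :=
            measure_mono inter_subset_right
      _ = ENNReal.ofReal (r n ^ Module.finrank ℝ E3) * B :=
            Measure.addHaar_closedBall' volume _ (hrpos n).le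
      _ = ENNReal.ofReal (r n ^ 3) * B := by rw [finrank_euclideanSpace_fin]
    have hre : r (n+1) ^ (-2:ℝ) * r n ^ 3 = 4 * R * q ^ n := by
      rw [Real.rpow_neg (hrpos _).le, Real.rpow_two]
      have hRne : R ≠ 0 := hR.ne'
      have hqne : q ≠ 0 := hq0.ne'
      have h1 : r (n+1) = R * q ^ (n+1) := rfl
      have h2 : r n = R * q ^ n := rfl
      rw [h1, h2, hqdef]
      field_simp [hRne]
      ring
    calc (∫⁻ u : E3 in s n, ENNReal.ofReal (‖u‖ ^ (-2 : ℝ)))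
        ≤ ∫⁻ _ : E3 in s n, ENNReal.ofReal (r (n+1) ^ (-2 : ℝ)) := hmono
    _ = ENNReal.ofReal (r (n+1) ^ (-2 : ℝ)) * volume (s n) := setLIntegral_const _ _
    _ ≤ ENNReal.ofReal (r (n+1) ^ (-2 : ℝ)) * (ENNReal.ofReal (r n ^ 3) * B) := by
        gcongr
    _ = ENNReal.ofReal (r (n+1) ^ (-2:ℝ) * r n ^ 3) * B := by
        rw [ENNReal.ofReal_mul (by positivity), mul_assoc]
    _ = ENNReal.ofReal (4 * R * q ^ n) * B := by rw [hre]
  calc (∫⁻ u : E3 in Metric.ball 0 R, ENNReal.ofReal (‖u‖ ^ (-2 : ℝ)))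
      = ∫⁻ u : E3 in Metric.ball 0 R \ {0}, ENNReal.ofReal (‖u‖ ^ (-2 : ℝ)) :=
        (setLIntegral_congr (diff_null_ae_eq_self hsing)).symm
  _ ≤ ∫⁻ u : E3 in ⋃ n, s n, ENNReal.ofReal (‖u‖ ^ (-2 : ℝ)) :=
        lintegral_mono_set hcover
  _ ≤ ∑' n, ∫⁻ u : E3 in s n, ENNReal.ofReal (‖u‖ ^ (-2 : ℝ)) :=
        lintegral_iUnion_le _ _
  _ ≤ ∑' n, ENNReal.ofReal (4 * R * q ^ n) * B := ENNReal.tsum_le_tsum hterm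
  _ = ∑' n : ℕ, (ENNReal.ofReal (4 * R) * B) * (ENNReal.ofReal q) ^ n := by
        congr 1
        funext n
        rw [ENNReal.ofReal_mul (by positivity), ENNReal.ofReal_pow hq0.le]
        ring
  _ = (ENNReal.ofReal (4 * R) * B) * ∑' n : ℕ, (ENNReal.ofReal q) ^ n :=
        ENNReal.tsum_mul_left
  _ = (ENNReal.ofReal (4 * R) * B) * 2 := by
        rw [ENNReal.tsum_geometric]
        congr 1
        have : ENNReal.ofReal q = 2⁻¹ := by
          rw [hqdef, show (1:ℝ)/2 = (2:ℝ)⁻¹ by norm_num,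
            ENNReal.ofReal_inv_of_pos two_pos, ENNReal.ofReal_ofNat]
        rw [this, ENNReal.one_sub_inv_two, inv_inv]
  _ = ENNReal.ofReal (8 * B.toReal * R) := by
        conv_lhs => rw [← ENNReal.ofReal_toReal hBfin]
        rw [← ENNReal.ofReal_ofNat 2, ← ENNReal.ofReal_mul (by positivity),
          ← ENNReal.ofReal_mul (by positivity)]
        congr 1
        ring

/-- The key L² bound. -/
lemma key (β : ℝ) (hβ : 9 / 2 < β) : ∃ D : ℝ, 0 ≤ D ∧ ∀ x : E3,
    (∫⁻ z : E3, ENNReal.ofReal ((jap z ^ ((3:ℝ) - β) / min (jap x) ‖x - z‖) ^ 2)) ≤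
      ENNReal.ofReal (D / jap x ^ 2) := by
  obtain ⟨c, hc, hball⟩ := ball_int
  have hβ0 : 0 < β := by linarith
  have hint : Integrable (fun z : E3 => ((1:ℝ) + ‖z‖ ^ 2) ^ (-(2*β-6) / 2)) volume := by
    apply integrable_rpow_neg_one_add_norm_sq
    rw [finrank_euclideanSpace_fin]
    push_cast
    linarith
  have hjb : ∀ z : E3, jap z ^ ((6:ℝ) - 2*β) = ((1:ℝ) + ‖z‖ ^ 2) ^ (-(2*β-6)/2) := by
    intro z
    rw [jap, Real.sqrt_eq_rpow, ← Real.rpow_mul (by positivity)]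
    congr 1
    ring
  have hI1fin : (∫⁻ z : E3, ENNReal.ofReal (jap z ^ ((6:ℝ) - 2*β))) < ∞ := by
    simp only [hjb]
    exact (hasFiniteIntegral_iff_ofReal
      (Filter.Eventually.of_forall fun z => by positivity)).1 hint.2
  set I₁ : ℝ := (∫⁻ z : E3, ENNReal.ofReal (jap z ^ ((6:ℝ) - 2*β))).toReal with hI1
  have hI1eq : (∫⁻ z : E3, ENNReal.ofReal (jap z ^ ((6:ℝ) - 2*β))) =
      ENNReal.ofReal I₁ := (ENNReal.ofReal_toReal hI1fin.ne).symm
  have hI1nn : 0 ≤ I₁ := ENNReal.toReal_nonneg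
  set c₂ : ℝ := c * (2:ℝ)⁻¹ ^ ((7:ℝ) - 2*β) with hc₂
  have hc₂nn : 0 ≤ c₂ := mul_nonneg hc (Real.rpow_nonneg (by norm_num) _)
  refine ⟨4 * I₁ + c₂, by positivity, ?_⟩
  intro x
  set a := jap x with ha
  have ha1 : 1 ≤ a := jap_one_le x
  have hapos : 0 < a := jap_pos x
  have hhalf : 0 < a / 2 := by linarith
  set S := Metric.ball x (a/2) with hS
  set F : E3 → ℝ≥0∞ :=
    fun z => ENNReal.ofReal ((jap z ^ ((3:ℝ) - β) / min (jap x) ‖x - z‖) ^ 2) with hF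
  have hsq : ∀ z : E3, (jap z ^ ((3:ℝ) - β)) ^ 2 = jap z ^ ((6:ℝ) - 2*β) := by
    intro z
    rw [← Real.rpow_two, ← Real.rpow_mul (jap_nonneg z),
      show ((3:ℝ) - β) * 2 = (6:ℝ) - 2*β by ring]
  -- bound on the complement of the ball
  have hC : (∫⁻ z : E3 in Sᶜ, F z) ≤ ENNReal.ofReal (4 * I₁ / a ^ 2) := by
    have hpt : ∀ z ∈ Sᶜ, F z ≤ ENNReal.ofReal (jap z ^ ((6:ℝ) - 2*β) * (4 / a ^ 2)) := by
      intro z hz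
      have hdist : a / 2 ≤ ‖x - z‖ := by
        have : ¬ dist z x < a / 2 := by simpa [hS, Metric.mem_ball] using hz
        have h2 : a/2 ≤ dist z x := not_lt.1 this
        rwa [dist_eq_norm, ← norm_sub_rev] at h2
      have hmin : a / 2 ≤ min (jap x) ‖x - z‖ := le_min (by linarith) hdist
      have hnum : 0 ≤ jap z ^ ((3:ℝ) - β) := Real.rpow_nonneg (jap_nonneg z) _
      have h1 : jap z ^ ((3:ℝ) - β) / min (jap x) ‖x - z‖ ≤
          jap z ^ ((3:ℝ) - β) / (a/2) :=
        div_le_div_of_nonneg_left hnum hhalf hmin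
      apply ENNReal.ofReal_le_ofReal
      calc (jap z ^ ((3:ℝ) - β) / min (jap x) ‖x - z‖) ^ 2
          ≤ (jap z ^ ((3:ℝ) - β) / (a/2)) ^ 2 := by
            apply pow_le_pow_left₀ (div_nonneg hnum (le_trans hhalf.le hmin)) h1
      _ = (jap z ^ ((3:ℝ) - β)) ^ 2 * (4 / a ^ 2) := by
            field_simp
            ring
      _ = jap z ^ ((6:ℝ) - 2*β) * (4 / a ^ 2) := by rw [hsq]
    calc (∫⁻ z : E3 in Sᶜ, F z)
        ≤ ∫⁻ z : E3 in Sᶜ, ENNReal.ofReal (jap z ^ ((6:ℝ) - 2*β) * (4 / a ^ 2)) := by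
          refine setLIntegral_mono ?_ hpt
          have : Measurable fun z : E3 => jap z ^ ((6:ℝ) - 2*β) * (4 / a ^ 2) := by
            apply Measurable.mul _ measurable_const
            exact (continuous_jap.rpow_const (fun z => Or.inl (jap_pos z).ne')).measurable
          exact this.ennreal_ofReal
    _ ≤ ∫⁻ z : E3, ENNReal.ofReal (jap z ^ ((6:ℝ) - 2*β) * (4 / a ^ 2)) :=
          setLIntegral_le_lintegral _ _
    _ = ∫⁻ z : E3, ENNReal.ofReal (4 / a ^ 2) * ENNReal.ofReal (jap z ^ ((6:ℝ) - 2*β)) := by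
          congr 1
          funext z
          rw [← ENNReal.ofReal_mul (by positivity)]
          congr 1
          ring
    _ = ENNReal.ofReal (4 / a ^ 2) * ENNReal.ofReal I₁ := by
          rw [lintegral_const_mul' _ _ ENNReal.ofReal_ne_top, hI1eq]
    _ = ENNReal.ofReal (4 * I₁ / a ^ 2) := by
          rw [← ENNReal.ofReal_mul (by positivity)]
          congr 1
          ring
  -- bound on the ball
  have hSbd : (∫⁻ z : E3 in S, F z) ≤ ENNReal.ofReal (c₂ / a ^ 2) := by
    have hpt : ∀ z ∈ S, F z ≤
        ENNReal.ofReal ((a/2) ^ ((6:ℝ) - 2*β) * ‖x - z‖ ^ (-2:ℝ)) := by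
      intro z hz
      have hdist : ‖x - z‖ < a / 2 := by
        have : dist z x < a / 2 := by simpa [hS, Metric.mem_ball] using hz
        rwa [dist_eq_norm, ← norm_sub_rev] at this
      have hminr : min (jap x) ‖x - z‖ = ‖x - z‖ :=
        min_eq_right (by linarith)
      have hjz : a / 2 ≤ jap z := by
        have := jap_lipschitz x z
        linarith
      have hnum : jap z ^ ((3:ℝ) - β) ≤ (a/2) ^ ((3:ℝ) - β) :=
        Real.rpow_le_rpow_of_nonpos hhalf hjz (by linarith)
      have hnn : 0 ≤ jap z ^ ((3:ℝ) - β) := Real.rpow_nonneg (jap_nonneg z) _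
      apply ENNReal.ofReal_le_ofReal
      rw [hminr]
      rcases eq_or_lt_of_le (norm_nonneg (x - z)) with h0 | h0
      · rw [← h0]
        simp [Real.zero_rpow (by norm_num : (-2:ℝ) ≠ 0)]
      · have hd2 : ‖x - z‖ ^ (-2:ℝ) = (‖x - z‖ ^ 2)⁻¹ := by
          rw [Real.rpow_neg (norm_nonneg _), Real.rpow_two]
        rw [hd2]
        calc (jap z ^ ((3:ℝ) - β) / ‖x - z‖) ^ 2
            = (jap z ^ ((3:ℝ) - β)) ^ 2 * (‖x - z‖ ^ 2)⁻¹ := by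
              field_simp
        _ ≤ ((a/2) ^ ((3:ℝ) - β)) ^ 2 * (‖x - z‖ ^ 2)⁻¹ := by
              gcongr
        _ = (a/2) ^ ((6:ℝ) - 2*β) * (‖x - z‖ ^ 2)⁻¹ := by
              congr 1
              rw [← Real.rpow_two, ← Real.rpow_mul hhalf.le,
                show ((3:ℝ) - β) * 2 = (6:ℝ) - 2*β by ring]
    have htrans : (∫⁻ z : E3 in S, ENNReal.ofReal (‖x - z‖ ^ (-2:ℝ))) =
        ∫⁻ u : E3 in Metric.ball 0 (a/2), ENNReal.ofReal (‖u‖ ^ (-2:ℝ)) := by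
      set H : E3 → ℝ≥0∞ :=
        (Metric.ball (0:E3) (a/2)).indicator
          (fun u => ENNReal.ofReal (‖u‖ ^ (-2:ℝ))) with hH
      have hind : ∀ z : E3,
          S.indicator (fun z => ENNReal.ofReal (‖x - z‖ ^ (-2:ℝ))) z = H (z + (-x)) := by
        intro z
        by_cases hz : z ∈ S
        · have hz' : z + (-x) ∈ Metric.ball (0:E3) (a/2) := by
            have : dist z x < a/2 := by simpa [hS, Metric.mem_ball] using hz
            rw [mem_ball_zero_iff, ← sub_eq_add_neg, ← dist_eq_norm]
            exact this
          rw [indicator_of_mem hz, hH, indicator_of_mem hz']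
          congr 2
          rw [← sub_eq_add_neg, norm_sub_rev]
        · have hz' : z + (-x) ∉ Metric.ball (0:E3) (a/2) := by
            intro hmem
            apply hz
            rw [mem_ball_zero_iff, ← sub_eq_add_neg] at hmem
            simp only [hS, Metric.mem_ball, dist_eq_norm]
            exact hmem
          rw [indicator_of_notMem hz, hH, indicator_of_notMem hz']
      calc (∫⁻ z : E3 in S, ENNReal.ofReal (‖x - z‖ ^ (-2:ℝ)))
          = ∫⁻ z : E3, S.indicator (fun z => ENNReal.ofReal (‖x - z‖ ^ (-2:ℝ))) z :=
            (lintegral_indicator measurableSet_ball _).symm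
      _ = ∫⁻ z : E3, H (z + (-x)) := by
            congr 1
            funext z
            exact hind z
      _ = ∫⁻ u : E3, H u := lintegral_add_right_eq_self H (-x)
      _ = ∫⁻ u : E3 in Metric.ball 0 (a/2), ENNReal.ofReal (‖u‖ ^ (-2:ℝ)) :=
            lintegral_indicator measurableSet_ball _
    have hmeas2 : Measurable fun z : E3 => ENNReal.ofReal (‖x - z‖ ^ (-2:ℝ)) := by
      fun_prop
    calc (∫⁻ z : E3 in S, F z)
        ≤ ∫⁻ z : E3 in S,
            ENNReal.ofReal ((a/2) ^ ((6:ℝ) - 2*β)) * ENNReal.ofReal (‖x - z‖ ^ (-2:ℝ)) := by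
          refine setLIntegral_mono ((measurable_const.mul hmeas2)) (fun z hz => ?_)
          refine le_trans (hpt z hz) ?_
          rw [← ENNReal.ofReal_mul (Real.rpow_nonneg hhalf.le _)]
    _ = ENNReal.ofReal ((a/2) ^ ((6:ℝ) - 2*β)) *
          ∫⁻ z : E3 in S, ENNReal.ofReal (‖x - z‖ ^ (-2:ℝ)) :=
          lintegral_const_mul' _ _ ENNReal.ofReal_ne_top
    _ ≤ ENNReal.ofReal ((a/2) ^ ((6:ℝ) - 2*β)) * ENNReal.ofReal (c * (a/2)) := by
          rw [htrans]
          exact mul_le_mul_right (hball _ hhalf) _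
    _ = ENNReal.ofReal ((a/2) ^ ((6:ℝ) - 2*β) * (c * (a/2))) :=
          (ENNReal.ofReal_mul (Real.rpow_nonneg hhalf.le _)).symm
    _ ≤ ENNReal.ofReal (c₂ / a ^ 2) := by
          apply ENNReal.ofReal_le_ofReal
          have hsplit : (a/2) ^ ((6:ℝ) - 2*β) * (a/2) = (a/2) ^ ((7:ℝ) - 2*β) := by
            rw [show (7:ℝ) - 2*β = ((6:ℝ) - 2*β) + 1 by ring,
              Real.rpow_add_one hhalf.ne']
          have hmul : (a/2) ^ ((7:ℝ) - 2*β) =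
              a ^ ((7:ℝ) - 2*β) * (2:ℝ)⁻¹ ^ ((7:ℝ) - 2*β) := by
            rw [div_eq_mul_inv, Real.mul_rpow hapos.le (by norm_num)]
          have hexp : a ^ ((7:ℝ) - 2*β) ≤ a ^ (-2:ℝ) :=
            Real.rpow_le_rpow_of_exponent_le ha1 (by linarith)
          have hainv : a ^ (-2:ℝ) = (a ^ 2)⁻¹ := by
            rw [Real.rpow_neg hapos.le, Real.rpow_two]
          calc (a/2) ^ ((6:ℝ) - 2*β) * (c * (a/2))
              = c * ((a/2) ^ ((6:ℝ) - 2*β) * (a/2)) := by ring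
          _ = c * (a ^ ((7:ℝ) - 2*β) * (2:ℝ)⁻¹ ^ ((7:ℝ) - 2*β)) := by
              rw [hsplit, hmul]
          _ ≤ c * ((a ^ 2)⁻¹ * (2:ℝ)⁻¹ ^ ((7:ℝ) - 2*β)) := by
              rw [← hainv]
              apply mul_le_mul_of_nonneg_left _ hc
              exact mul_le_mul_of_nonneg_right hexp (Real.rpow_nonneg (by norm_num) _)
          _ = c₂ / a ^ 2 := by
              rw [hc₂, div_eq_mul_inv]
              ring
  calc (∫⁻ z : E3, F z)
      = (∫⁻ z : E3 in S, F z) + ∫⁻ z : E3 in Sᶜ, F z :=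
        (lintegral_add_compl F measurableSet_ball).symm
  _ ≤ ENNReal.ofReal (c₂ / a ^ 2) + ENNReal.ofReal (4 * I₁ / a ^ 2) := add_le_add hSbd hC
  _ = ENNReal.ofReal ((4 * I₁ + c₂) / a ^ 2) := by
        rw [← ENNReal.ofReal_add (by positivity) (by positivity)]
        congr 1
        ring

/-- L² membership and norm bound for the weight functions. -/
lemma elp_aux (β : ℝ) (hβ : 9 / 2 < β) : ∃ D' : ℝ, 0 ≤ D' ∧
    ∀ (v : E3 → ℝ), Measurable v → (∀ z : E3, 0 ≤ v z) →
      (∀ z : E3, v z ≤ jap z ^ (-β)) → ∀ x : E3,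
    MemLp (fun z => jap z ^ 3 * v z / min (jap x) ‖x - z‖) 2 volume ∧
    (eLpNorm (fun z => jap z ^ 3 * v z / min (jap x) ‖x - z‖) 2 volume).toReal ≤
      Real.sqrt D' / jap x := by
  obtain ⟨D, hD, hkey⟩ := key β hβ
  refine ⟨D, hD, ?_⟩
  intro v hv hv0 hvle x
  set f : E3 → ℝ := fun z => jap z ^ 3 * v z / min (jap x) ‖x - z‖ with hfdef
  have hfm : Measurable f := by
    apply Measurable.div
    · exact ((continuous_jap.pow 3).measurable).mul hv
    · exact (continuous_const.min ((continuous_const.sub continuous_id).norm)).measurable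
  have hf0 : ∀ z, 0 ≤ f z := fun z =>
    div_nonneg (mul_nonneg (pow_nonneg (jap_nonneg z) 3) (hv0 z))
      (le_min (jap_nonneg x) (norm_nonneg _))
  have hfF : ∀ z, f z ≤ jap z ^ ((3:ℝ) - β) / min (jap x) ‖x - z‖ := by
    intro z
    have hnum : jap z ^ 3 * v z ≤ jap z ^ ((3:ℝ) - β) := by
      have h1 : jap z ^ 3 * v z ≤ jap z ^ 3 * jap z ^ (-β) :=
        mul_le_mul_of_nonneg_left (hvle z) (pow_nonneg (jap_nonneg z) 3)
      have h2 : jap z ^ 3 * jap z ^ (-β) = jap z ^ ((3:ℝ) - β) := by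
        rw [← Real.rpow_natCast (jap z) 3, ← Real.rpow_add (jap_pos z)]
        congr 1
      linarith
    rcases eq_or_lt_of_le (le_min (jap_nonneg x) (norm_nonneg (x - z))) with h0 | h0
    · have hmin0 : min (jap x) ‖x - z‖ = 0 := h0.symm
      simp only [hfdef, hmin0, div_zero, le_refl]
    · exact div_le_div_of_nonneg_right hnum h0.le
  have h2 : eLpNorm f 2 volume ≤ ENNReal.ofReal (Real.sqrt D / jap x) := by
    rw [eLpNorm_eq_lintegral_rpow_enorm_toReal two_ne_zero ENNReal.ofNat_ne_top]
    simp only [ENNReal.toReal_ofNat]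
    have hlin : (∫⁻ z : E3, (‖f z‖₊ : ℝ≥0∞) ^ (2:ℝ)) ≤ ENNReal.ofReal (D / jap x ^ 2) := by
      refine le_trans (lintegral_mono fun z => ?_) (hkey x)
      have h1 : (‖f z‖₊ : ℝ≥0∞) = ENNReal.ofReal (f z) := by
        rw [← enorm_eq_nnnorm, ← ofReal_norm, Real.norm_of_nonneg (hf0 z)]
      rw [h1, ENNReal.ofReal_rpow_of_nonneg (hf0 z) (by norm_num)]
      apply ENNReal.ofReal_le_ofReal
      rw [Real.rpow_two]
      have hFnn : 0 ≤ jap z ^ ((3:ℝ) - β) / min (jap x) ‖x - z‖ :=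
        div_nonneg (Real.rpow_nonneg (jap_nonneg z) _)
          (le_min (jap_nonneg x) (norm_nonneg _))
      exact pow_le_pow_left₀ (hf0 z) (hfF z) 2
    calc (∫⁻ z : E3, (‖f z‖₊ : ℝ≥0∞) ^ (2:ℝ)) ^ ((1:ℝ)/2)
        ≤ (ENNReal.ofReal (D / jap x ^ 2)) ^ ((1:ℝ)/2) := by
          exact ENNReal.rpow_le_rpow hlin (by norm_num)
    _ = ENNReal.ofReal (Real.sqrt D / jap x) := by
          rw [ENNReal.ofReal_rpow_of_nonneg (by positivity) (by norm_num)]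
          congr 1
          rw [← Real.sqrt_eq_rpow, Real.sqrt_div hD, Real.sqrt_sq (jap_nonneg x)]
  refine ⟨⟨hfm.aestronglyMeasurable, lt_of_le_of_lt h2 ENNReal.ofReal_lt_top⟩, ?_⟩
  exact ENNReal.toReal_le_of_le_ofReal
    (div_nonneg (Real.sqrt_nonneg D) (jap_nonneg x)) h2

theorem stmt19 (β : ℝ) (hβ : 9 / 2 < β) :
    ∃ C : ℝ, ∀ (v : E3 → ℝ), Measurable v → (∀ z : E3, 0 ≤ v z) →
      (∀ z : E3, v z ≤ jap z ^ (-β)) →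
      ∀ (K : E3 → E3 → ℂ), Measurable (Function.uncurry K) →
      ∀ M : ℝ, 0 ≤ M →
      (∀ f g : E3 → ℝ, MemLp f 2 volume → MemLp g 2 volume →
        (∀ z, 0 ≤ f z) → (∀ w, 0 ≤ g w) →
        (∫ z : E3, ∫ w : E3, ‖K z w‖ * f z * g w)
          ≤ M * (eLpNorm f 2 volume).toReal * (eLpNorm g 2 volume).toReal) →
      ∀ x y : E3,
        (∫ z : E3, ∫ w : E3,
            jap z ^ 3 * v z * ‖K z w‖ * v w * jap w ^ 3 /
              (min (jap x) ‖x - z‖ * min (jap y) ‖w - y‖))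
          ≤ C * M / (jap x * jap y) := by
  obtain ⟨D, hD, haux⟩ := elp_aux β hβ
  refine ⟨D, ?_⟩
  intro v hv hv0 hvle K hK M hM hop x y
  set f : E3 → ℝ := fun z => jap z ^ 3 * v z / min (jap x) ‖x - z‖ with hfdef
  set g : E3 → ℝ := fun w => jap w ^ 3 * v w / min (jap y) ‖w - y‖ with hgdef
  obtain ⟨hfmem, hfnorm⟩ := haux v hv hv0 hvle x
  have hgaux := haux v hv hv0 hvle y
  have hgmem : MemLp g 2 volume := by
    have := hgaux.1
    have hswap : (fun w : E3 => jap w ^ 3 * v w / min (jap y) ‖y - w‖) = g := by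
      funext w
      rw [hgdef]
      simp only [norm_sub_rev y w]
    rwa [hswap] at this
  have hgnorm : (eLpNorm g 2 volume).toReal ≤ Real.sqrt D / jap y := by
    have := hgaux.2
    have hswap : (fun w : E3 => jap w ^ 3 * v w / min (jap y) ‖y - w‖) = g := by
      funext w
      rw [hgdef]
      simp only [norm_sub_rev y w]
    rwa [hswap] at this
  have hf0 : ∀ z, 0 ≤ f z := fun z =>
    div_nonneg (mul_nonneg (pow_nonneg (jap_nonneg z) 3) (hv0 z))
      (le_min (jap_nonneg x) (norm_nonneg _))
  have hg0 : ∀ w, 0 ≤ g w := fun w =>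
    div_nonneg (mul_nonneg (pow_nonneg (jap_nonneg w) 3) (hv0 w))
      (le_min (jap_nonneg y) (norm_nonneg _))
  have hrw : ∀ z w : E3,
      jap z ^ 3 * v z * ‖K z w‖ * v w * jap w ^ 3 /
        (min (jap x) ‖x - z‖ * min (jap y) ‖w - y‖) = ‖K z w‖ * f z * g w := by
    intro z w
    rw [hfdef, hgdef]
    ring
  have hxpos : 0 < jap x := jap_pos x
  have hypos : 0 < jap y := jap_pos y
  calc (∫ z : E3, ∫ w : E3,
          jap z ^ 3 * v z * ‖K z w‖ * v w * jap w ^ 3 /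
            (min (jap x) ‖x - z‖ * min (jap y) ‖w - y‖))
      = ∫ z : E3, ∫ w : E3, ‖K z w‖ * f z * g w := by
        simp only [hrw]
  _ ≤ M * (eLpNorm f 2 volume).toReal * (eLpNorm g 2 volume).toReal :=
        hop f g hfmem hgmem hf0 hg0
  _ ≤ M * (Real.sqrt D / jap x) * (Real.sqrt D / jap y) := by
        apply mul_le_mul
        · exact mul_le_mul_of_nonneg_left hfnorm hM
        · exact hgnorm
        · exact ENNReal.toReal_nonneg
        · positivity
  _ = D * M / (jap x * jap y) := by
        field_simp
        conv_rhs => rw [← Real.mul_self_sqrt hD]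
        ring

end
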